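/- Let f : ℝⁿ → ℝ be twice continuously differentiable with L_H-Lipschitz Hessian, L_H > 0. Fix x ∈ ℝⁿ, set g := ∇f(x) and H := ∇²f(x), and suppose g ≠ 0. Let σ > 0, κ_a ≥ 1, ς₁ ∈ (0,1], ς₂ ∈ [0,1/2), κ_θ > 0, η₂ ∈ (0,1). Suppose H + √(κ_a σ‖g‖)·I is positive definite and s ∈ ℝⁿ satisfies ‖(H + √(κ_a σ‖g‖)·I)s + g‖ ≤ ς₂·√(κ_a σ‖g‖)·‖s‖ and ‖s‖ ≤ ((1+κ_θ)/ς₁)·√(‖g‖/(κ_a σ)). If σ ≥ L_H(1+κ_θ)/(3 κ_a ς₁ (1−2ς₂)(1−η₂)), then f(x) − f(x+s) ≥ η₂·(−⟨g,s⟩ − (1/2)⟨s,Hs⟩). -/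

import Mathlib

open RealInnerProductSpace

/-- Second-order Taylor bound for a function with Lipschitz Hessian. -/
theorem taylor_bound_aux {n : ℕ}
    (f : EuclideanSpace ℝ (Fin n) → ℝ)
    (Hess : EuclideanSpace ℝ (Fin n) → EuclideanSpace ℝ (Fin n) →L[ℝ] EuclideanSpace ℝ (Fin n))
    (LH : ℝ)
    (hf : ContDiff ℝ 2 f)
    (hHess : ∀ y, HasFDerivAt (gradient f) (Hess y) y)
    (hLip : ∀ y z, ‖Hess y - Hess z‖ ≤ LH * ‖y - z‖)
    (x s : EuclideanSpace ℝ (Fin n)) :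
    f (x + s) - f x - ⟪gradient f x, s⟫ - 1/2 * ⟪s, Hess x s⟫ ≤ LH * ‖s‖^3 / 6 := by
  set G := gradient f with hG
  set g := G x with hg
  set H := Hess x with hH
  have hdiff : Differentiable ℝ f := hf.differentiable (by norm_num)
  have hlineDeriv : ∀ t : ℝ, HasDerivAt (fun u : ℝ => x + u • s) s t := fun t => by
    simpa using ((hasDerivAt_id t).smul_const s).const_add x
  have hGderiv : ∀ t : ℝ, HasDerivAt (fun u : ℝ => G (x + u • s)) (Hess (x + t • s) s) t :=
    fun t => by
      have := (hHess (x + t • s)).comp_hasDerivAt t (hlineDeriv t)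
      exact this
  have hψderiv : ∀ t : ℝ, HasDerivAt (fun u : ℝ => G (x + u • s) - g - u • (H s))
      (Hess (x + t • s) s - H s) t := by
    intro t
    exact ((hGderiv t).sub_const g).sub (by simpa using (hasDerivAt_id t).smul_const (H s))
  have hA : ∀ t ∈ Set.Icc (0:ℝ) 1,
      ‖G (x + t • s) - g - t • (H s)‖ ≤ LH * t^2 * ‖s‖^2 / 2 := by
    intro t ht
    have hB : ∀ u : ℝ, HasDerivAt (fun v : ℝ => LH * v^2 * ‖s‖^2 / 2) (LH * u * ‖s‖^2) u := by
      intro u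
      have := (((hasDerivAt_pow 2 u).const_mul LH).mul_const (‖s‖^2)).div_const 2
      refine this.congr_deriv ?_
      ring
    have := image_norm_le_of_norm_deriv_right_le_deriv_boundary
      (f := fun u : ℝ => G (x + u • s) - g - u • (H s))
      (f' := fun u : ℝ => Hess (x + u • s) s - H s) (a := 0) (b := 1)
      (fun u _ => ((hψderiv u).continuousAt).continuousWithinAt)
      (fun u _ => (hψderiv u).hasDerivWithinAt)
      (B := fun v => LH * v^2 * ‖s‖^2 / 2) (B' := fun u => LH * u * ‖s‖^2)
      (by simp [hg]) hB
      (fun u hu => by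
        show ‖Hess (x + u • s) s - H s‖ ≤ LH * u * ‖s‖^2
        have h1 : Hess (x + u • s) s - H s = (Hess (x + u • s) - Hess x) s := by
          simp [hH]
        rw [h1]
        calc ‖(Hess (x + u • s) - Hess x) s‖ ≤ ‖Hess (x + u • s) - Hess x‖ * ‖s‖ :=
              (Hess (x + u • s) - Hess x).le_opNorm s
          _ ≤ (LH * ‖x + u • s - x‖) * ‖s‖ := by
              gcongr; exact hLip _ _
          _ = LH * u * ‖s‖^2 := by
              rw [show x + u • s - x = u • s by abel, norm_smul]
              simp [abs_of_nonneg hu.1]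
              ring)
      ht
    exact this
  have hfderiv : ∀ t : ℝ, HasDerivAt (fun u : ℝ => f (x + u • s)) ⟪G (x + t • s), s⟫ t := by
    intro t
    have h1 : HasGradientAt f (G (x + t • s)) (x + t • s) :=
      (hdiff (x + t • s)).hasGradientAt
    have h2 := h1.hasFDerivAt.comp_hasDerivAt t (hlineDeriv t)
    simp at h2
    exact h2
  set φ : ℝ → ℝ := fun t => f (x + t • s) - f x - t * ⟪g, s⟫ - t^2/2 * ⟪s, H s⟫ with hφ
  have hφderiv : ∀ t : ℝ, HasDerivAt φ ⟪G (x + t • s) - g - t • (H s), s⟫ t := by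
    intro t
    have h1 : HasDerivAt (fun u : ℝ => u * ⟪g, s⟫) ⟪g, s⟫ t := by
      simpa using (hasDerivAt_id t).mul_const ⟪g, s⟫
    have h2 : HasDerivAt (fun u : ℝ => u^2/2 * ⟪s, H s⟫) (t * ⟪s, H s⟫) t := by
      have := ((hasDerivAt_pow 2 t).div_const 2).mul_const ⟪s, H s⟫
      refine this.congr_deriv ?_
      ring
    have h3 := (((hfderiv t).sub_const (f x)).sub h1).sub h2
    refine h3.congr_deriv ?_
    rw [inner_sub_left, inner_sub_left, real_inner_smul_left, real_inner_comm s (H s)]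
  have hBnd : ∀ t ∈ Set.Icc (0:ℝ) 1, ‖φ t‖ ≤ LH * t^3 * ‖s‖^3 / 6 := by
    intro t ht
    have hB : ∀ u : ℝ, HasDerivAt (fun v : ℝ => LH * v^3 * ‖s‖^3 / 6) (LH * u^2 * ‖s‖^3 / 2) u := by
      intro u
      have := (((hasDerivAt_pow 3 u).const_mul LH).mul_const (‖s‖^3)).div_const 6
      refine this.congr_deriv ?_
      ring
    exact image_norm_le_of_norm_deriv_right_le_deriv_boundary (a := 0) (b := 1)
      (fun u _ => ((hφderiv u).continuousAt).continuousWithinAt)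
      (fun u _ => (hφderiv u).hasDerivWithinAt)
      (by simp [hφ]) hB
      (fun u hu => by
        calc ‖⟪G (x + u • s) - g - u • (H s), s⟫‖
            ≤ ‖G (x + u • s) - g - u • (H s)‖ * ‖s‖ := norm_inner_le_norm _ _
          _ ≤ (LH * u^2 * ‖s‖^2 / 2) * ‖s‖ := by
              gcongr; exact hA u ⟨hu.1, le_of_lt hu.2⟩
          _ = LH * u^2 * ‖s‖^3 / 2 := by ring)
      ht
  have := hBnd 1 ⟨zero_le_one, le_refl 1⟩
  simp only [hφ, one_smul, one_pow, one_mul] at this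
  rw [Real.norm_eq_abs] at this
  have h := (abs_le.mp this).2
  linarith

/-- Lemma 3.1 of the paper, convex-type step case: if the regularization
parameter is large enough, the iteration is very successful. -/
theorem very_successful_convex_step {n : ℕ}
    (f : EuclideanSpace ℝ (Fin n) → ℝ)
    (Hess : EuclideanSpace ℝ (Fin n) → EuclideanSpace ℝ (Fin n) →L[ℝ] EuclideanSpace ℝ (Fin n))
    (LH : ℝ) (hLH : 0 < LH)
    (hf : ContDiff ℝ 2 f)
    (hHess : ∀ y, HasFDerivAt (gradient f) (Hess y) y)
    (hLip : ∀ y z, ‖Hess y - Hess z‖ ≤ LH * ‖y - z‖)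
    (x s : EuclideanSpace ℝ (Fin n))
    (hg : gradient f x ≠ 0)
    (σ κa ς₁ ς₂ κθ η₂ : ℝ) (hσ : 0 < σ) (hκa : 1 ≤ κa)
    (hς₁0 : 0 < ς₁) (hς₁1 : ς₁ ≤ 1) (hς₂0 : 0 ≤ ς₂) (hς₂1 : ς₂ < 1 / 2) (hκθ : 0 < κθ)
    (hη₂0 : 0 < η₂) (hη₂1 : η₂ < 1)
    (hpd : ∀ w : EuclideanSpace ℝ (Fin n), w ≠ 0 →
      0 < ⟪w, Hess x w⟫ + Real.sqrt (κa * σ * ‖gradient f x‖) * ‖w‖ ^ 2)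
    (hres : ‖Hess x s + Real.sqrt (κa * σ * ‖gradient f x‖) • s + gradient f x‖
      ≤ ς₂ * Real.sqrt (κa * σ * ‖gradient f x‖) * ‖s‖)
    (hslen : ‖s‖ ≤ ((1 + κθ) / ς₁) * Real.sqrt (‖gradient f x‖ / (κa * σ)))
    (hσbig : LH * (1 + κθ) / (3 * κa * ς₁ * (1 - 2 * ς₂) * (1 - η₂)) ≤ σ) :
    f x - f (x + s) ≥ η₂ * (-⟪gradient f x, s⟫ - (1 / 2) * ⟪s, Hess x s⟫) := by
  by_cases hs : s = 0
  · subst hs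
    simp
  set g := gradient f x with hgdef
  set H := Hess x with hHdef
  set lam := Real.sqrt (κa * σ * ‖g‖) with hlamdef
  have hκa0 : (0:ℝ) < κa := lt_of_lt_of_le one_pos hκa
  have hgnorm : 0 < ‖g‖ := norm_pos_iff.mpr hg
  have hκσ : 0 < κa * σ := mul_pos hκa0 hσ
  have hlam : 0 < lam := Real.sqrt_pos.mpr (by positivity)
  have hsn : 0 < ‖s‖ := norm_pos_iff.mpr hs
  -- residual bound in inner product form
  have hinner_res : ⟪H s, s⟫ + lam * ‖s‖^2 + ⟪g, s⟫ ≤ ς₂ * lam * ‖s‖^2 := by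
    have h1 : ⟪H s + lam • s + g, s⟫ ≤ ‖H s + lam • s + g‖ * ‖s‖ :=
      real_inner_le_norm _ _
    have h2 : ‖H s + lam • s + g‖ * ‖s‖ ≤ (ς₂ * lam * ‖s‖) * ‖s‖ := by
      gcongr
    have h3 : ⟪H s + lam • s + g, s⟫ = ⟪H s, s⟫ + lam * ‖s‖^2 + ⟪g, s⟫ := by
      rw [inner_add_left, inner_add_left, real_inner_smul_left,
        real_inner_self_eq_norm_sq]
    nlinarith [h1, h2, h3]
  have hpds : 0 < ⟪s, H s⟫ + lam * ‖s‖^2 := hpd s hs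
  have hsym : ⟪H s, s⟫ = ⟪s, H s⟫ := real_inner_comm _ _
  -- lower bound on the model decrease
  have hm : -⟪g, s⟫ - 1/2 * ⟪s, H s⟫ ≥ (1/2 - ς₂) * lam * ‖s‖^2 := by
    nlinarith [hinner_res, hpds, hsym]
  -- rewrite the step length bound
  have hsqrt : Real.sqrt (‖g‖ / (κa * σ)) = lam / (κa * σ) := by
    have h1 : ‖g‖ / (κa * σ) = (lam / (κa * σ))^2 := by
      rw [div_pow, hlamdef, Real.sq_sqrt (by positivity)]
      field_simp
    rw [h1, Real.sqrt_sq (by positivity)]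
  rw [hsqrt] at hslen
  -- key length bound
  have hσbig' : LH * (1 + κθ) ≤ σ * (3 * κa * ς₁ * (1 - 2 * ς₂) * (1 - η₂)) := by
    have hden : 0 < 3 * κa * ς₁ * (1 - 2 * ς₂) * (1 - η₂) :=
      mul_pos (mul_pos (mul_pos (mul_pos (by norm_num) hκa0) hς₁0) (by linarith)) (by linarith)
    calc LH * (1 + κθ)
        = LH * (1 + κθ) / (3 * κa * ς₁ * (1 - 2 * ς₂) * (1 - η₂))
          * (3 * κa * ς₁ * (1 - 2 * ς₂) * (1 - η₂)) := by rw [div_mul_cancel₀ _ hden.ne']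
      _ ≤ σ * (3 * κa * ς₁ * (1 - 2 * ς₂) * (1 - η₂)) := by gcongr
  have key : LH * ‖s‖ ≤ 3 * (1 - 2 * ς₂) * (1 - η₂) * lam := by
    calc LH * ‖s‖ ≤ LH * ((1 + κθ) / ς₁ * (lam / (κa * σ))) := by gcongr
      _ = (LH * (1 + κθ)) * lam / (ς₁ * (κa * σ)) := by ring
      _ ≤ (σ * (3 * κa * ς₁ * (1 - 2 * ς₂) * (1 - η₂))) * lam / (ς₁ * (κa * σ)) := by
          gcongr
      _ = 3 * (1 - 2 * ς₂) * (1 - η₂) * lam := by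
          field_simp
  -- Taylor bound
  have htaylor := taylor_bound_aux f Hess LH hf hHess hLip x s
  have h1 : LH * ‖s‖ * ‖s‖^2 ≤ 3 * (1 - 2 * ς₂) * (1 - η₂) * lam * ‖s‖^2 :=
    mul_le_mul_of_nonneg_right key (sq_nonneg _)
  have h2 : (1 - η₂) * ((1/2 - ς₂) * lam * ‖s‖^2) ≤ (1 - η₂) * (-⟪g, s⟫ - 1/2 * ⟪s, H s⟫) :=
    mul_le_mul_of_nonneg_left hm (by linarith)
  have h3 : ‖s‖^3 = ‖s‖ * ‖s‖^2 := by ring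
  rw [h3] at htaylor
  have hfin : LH * ‖s‖ * ‖s‖^2 / 6 ≤ (1 - η₂) * (-⟪g, s⟫ - 1/2 * ⟪s, H s⟫) := by
    linarith [h1, h2]
  linarith [htaylor, hfin]
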